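/- Let 𝕂 be a field of prime characteristic p, q, r ∈ 𝕂ˣ, and let j, n ∈ ℕ₀ with j < n, n - j even, q^{n+j-1}r² = 1, and b_n = ∏_{i=0}^{n-1}(1-q^i r) ≠ 0. Define Q = (∑_{i=0}^{(n-j)/2 - 1} (q^{n+j-1}r²)^i) · ∏_{i=0}^{n-j-1}(1 - q^{j+i}r). Then Q = 0 if and only if 2p divides n - j. -/
import Mathlib


variable {K : Type*} [Field K]

/-- The q-number `(k)_x = ∑_{i=0}^{k-1} x^i`. -/
def qNum (x : K) (k : ℕ) : K := ∑ i ∈ Finset.range k, x ^ i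

/-- The q-factorial `(m)_q! = ∏_{k=1}^m (k)_q`. -/
def qFac (q : K) (m : ℕ) : K := ∏ k ∈ Finset.range m, qNum q (k + 1)

/-- `b_m = ∏_{i=0}^{m-1} (1 - q^i r)`. -/
def bProd (q r : K) (m : ℕ) : K := ∏ i ∈ Finset.range m, (1 - q ^ i * r)

/-- The recursively defined set 𝕁 = 𝕁^p_{q,r,s}. -/
def memJ (q r s : K) : ℕ → Prop
  | j => q ^ (j * (j - 1) / 2) * (-r) ^ j * s = -1 ∧
      ∀ n, n < j → memJ q r s n →
        if (j - n) % 2 = 0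
        then qNum (q ^ (n + j - 1) * r ^ 2) ((j - n) / 2) = 0
        else qNum (-(q ^ ((n + j - 1) / 2) * r)) (j - n) = 0
  termination_by j => j

/-- The subset 𝕁₁ ⊆ 𝕁 (condition (1) of Lemma le:J). -/
def memJ1 (q r s : K) (j : ℕ) : Prop :=
  memJ q r s j ∧ ∀ k, k < j → memJ q r s k → q ^ (k + j - 1) * r ^ 2 ≠ 1

/-- The subset 𝕁₂ ⊆ 𝕁 (condition (2) of Lemma le:J). -/
def memJ2 (q r s : K) (n : ℕ) : Prop :=
  memJ q r s n ∧ ∃ j, j < n ∧ memJ q r s j ∧ q ^ (n + j - 1) * r ^ 2 = 1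

theorem stmt_9 (p : ℕ) [CharP K p] (hp : p.Prime) (q r : K) (hq : q ≠ 0) (hr : r ≠ 0)
    (j n : ℕ) (hjn : j < n) (heven : (n - j) % 2 = 0)
    (hqr : q ^ (n + j - 1) * r ^ 2 = 1) (hb : bProd q r n ≠ 0) :
    qNum (q ^ (n + j - 1) * r ^ 2) ((n - j) / 2) *
        ∏ i ∈ Finset.range (n - j), (1 - q ^ (j + i) * r) = 0 ↔
      (2 * p) ∣ (n - j) := by
  have hprod : (∏ i ∈ Finset.range (n - j), (1 - q ^ (j + i) * r)) ≠ 0 := by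
    intro h
    apply hb
    have : n = j + (n - j) := by omega
    rw [bProd, this, Finset.prod_range_add]
    apply mul_eq_zero_of_right
    rw [← h]
  rw [hqr, mul_eq_zero]
  have hq1 : qNum (1 : K) ((n - j) / 2) = (((n - j) / 2 : ℕ) : K) := by
    simp [qNum]
  constructor
  · rintro (h | h)
    · rw [hq1, CharP.cast_eq_zero_iff K p] at h
      obtain ⟨m, hm⟩ := h
      have h2 : 2 * (p * m) = 2 * p * m := by ring
      exact ⟨m, by omega⟩
    · exact absurd h hprod
  · rintro ⟨m, hm⟩
    left
    rw [hq1, CharP.cast_eq_zero_iff K p]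
    have h2 : 2 * (p * m) = 2 * p * m := by ring
    exact ⟨m, by omega⟩
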